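/- Let L : [0,τ]×X×Y → ℝ be a differentiable parametrized Lagrangian with rate function ℓ, satisfying (H0a): for all ε ∈ [0,τ] the state set E(ε) = {U_ε} is a singleton, and the adjoint equation at ε = 0 (find P₀ ∈ Y with ∂_U L(0,U₀,P₀)(φ) = 0 for all φ ∈ X) admits a unique solution P₀. Assume moreover that for each ε ∈ [0,τ] the directional derivatives ∂_U L(ε, U₀+θ(U_ε−U₀), P₀)(U_ε−U₀) exist for almost all θ ∈ [0,1], are integrable in θ, and L(ε,U_ε,P₀) − L(ε,U₀,P₀) = ∫₀¹ ∂_U L(ε, U₀+θ(U_ε−U₀), P₀)(U_ε−U₀) dθ. Define for ε > 0: R₁^ε(U₀,P₀) = (1/ℓ(ε)) ∫₀¹ [∂_U L(ε, θU_ε+(1−θ)U₀, P₀) − ∂_U L(ε, U₀, P₀)](U_ε−U₀) dθ and R₂^ε(U₀,P₀) = (1/ℓ(ε)) [∂_U L(ε, U₀, P₀) − ∂_U L(0, U₀, P₀)](U_ε−U₀). If the limits R₁(U₀,P₀) = lim_{ε→0⁺} R₁^ε(U₀,P₀) and R₂(U₀,P₀) = lim_{ε→0⁺} R₂^ε(U₀,P₀)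 exist, then the ℓ-derivative d_ℓ g(0) = lim_{ε→0⁺} (g(ε) − g(0))/ℓ(ε) of the reduced functional g(ε) = L(ε,U_ε,0) exists and d_ℓ g(0) = ∂_ℓ L(0,U₀,P₀) + R₁(U₀,P₀) + R₂(U₀,P₀). -/

import Mathlib

open Filter Topology MeasureTheory

noncomputable section

/-- **Gangl–Sturm theorem on the `ℓ`-derivative of a parametrized Lagrangian.**
Let `L : [0,τ] × X × Y → ℝ` be a differentiable parametrized Lagrangian (affine
in the adjoint variable) with rate function `ℓ` (`ℓ(0) = 0`, `ℓ > 0` on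
`(0,τ]`), satisfying (H0a): for each `ε` the state set is the singleton
`{U_ε}` (the state equation, by affineness, being `L(ε,U_ε,ψ) = L(ε,U_ε,0)` for
all `ψ`), and the adjoint equation at `ε = 0` has the unique solution `P₀`
(`DU` denotes the directional derivative `∂_U L`).  Assume the directional
derivatives along the segment `[U₀,U_ε]` in direction `U_ε − U₀` exist a.e.,
are integrable in `θ`, and satisfy the fundamental-theorem identity
(absolute continuity), and that `∂_ℓ L(0,U₀,P₀)` exists.  If the limits
`R₁(U₀,P₀)` and `R₂(U₀,P₀)` of the two remainder terms exist, then the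
`ℓ`-derivative of `g(ε) = L(ε,U_ε,0)` exists at `0` and
`d_ℓ g(0) = ∂_ℓ L(0,U₀,P₀) + R₁(U₀,P₀) + R₂(U₀,P₀)`. -/
theorem stmt_12 {X Y : Type*} [AddCommGroup X] [Module ℝ X] [AddCommGroup Y] [Module ℝ Y]
    (τ : ℝ) (hτ : 0 < τ)
    (L : ℝ → X → Y → ℝ)
    -- parametrized Lagrangian: affine in the adjoint variable
    (haff : ∀ (ε : ℝ) (U : X) (P Q : Y) (t : ℝ),
      L ε U (t • P + (1 - t) • Q) = t * L ε U P + (1 - t) * L ε U Q)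
    -- rate function
    (ℓ : ℝ → ℝ) (hℓ0 : ℓ 0 = 0) (hℓpos : ∀ ε ∈ Set.Ioc (0:ℝ) τ, 0 < ℓ ε)
    -- directional derivative `∂_U L` (as data)
    (DU : ℝ → X → Y → X → ℝ)
    -- (H0a)(i): the state set `E(ε)` is the singleton `{Usel ε}`
    (Usel : ℝ → X)
    (hstate : ∀ ε ∈ Set.Icc (0:ℝ) τ,
      {U : X | ∀ ψ : Y, L ε U ψ = L ε U 0} = {Usel ε})
    -- (H0a)(ii): the adjoint equation at `ε = 0` has the unique solution `P₀`
    (P0 : Y)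
    (hadj : {P : Y | ∀ φ : X, DU 0 (Usel 0) P φ = 0} = {P0})
    -- a.e. existence of the directional derivative along the segment, and
    -- integrability in `θ`
    (hDU : ∀ ε ∈ Set.Icc (0:ℝ) τ,
      (∀ᵐ θ ∂(volume.restrict (Set.Icc (0:ℝ) 1)),
        Tendsto (fun t : ℝ =>
            (L ε (Usel 0 + θ • (Usel ε - Usel 0) + t • (Usel ε - Usel 0)) P0
              - L ε (Usel 0 + θ • (Usel ε - Usel 0)) P0) / t)
          (𝓝[>] 0) (𝓝 (DU ε (Usel 0 + θ • (Usel ε - Usel 0)) P0 (Usel ε - Usel 0))))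
      ∧ IntervalIntegrable
          (fun θ : ℝ => DU ε (Usel 0 + θ • (Usel ε - Usel 0)) P0 (Usel ε - Usel 0))
          volume 0 1)
    -- absolute continuity of `θ ↦ L(ε, U₀ + θ(U_ε−U₀), P₀)`, expressed through
    -- the fundamental-theorem-of-calculus identity it implies
    (hAC : ∀ ε ∈ Set.Icc (0:ℝ) τ,
      L ε (Usel ε) P0 - L ε (Usel 0) P0
        = ∫ θ in (0:ℝ)..1, DU ε (Usel 0 + θ • (Usel ε - Usel 0)) P0 (Usel ε - Usel 0))
    -- differentiability in `ℓ`: `∂_ℓ L(0,U₀,P₀)` exists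
    (dL : ℝ)
    (hdL : Tendsto (fun ε : ℝ => (L ε (Usel 0) P0 - L 0 (Usel 0) P0) / ℓ ε)
      (𝓝[>] 0) (𝓝 dL))
    -- existence of the limits of the remainders `R₁^ε` and `R₂^ε`
    (R1 : ℝ)
    (hR1 : Tendsto (fun ε : ℝ => (1 / ℓ ε) *
        ∫ θ in (0:ℝ)..1,
          (DU ε (θ • Usel ε + (1 - θ) • Usel 0) P0 (Usel ε - Usel 0)
            - DU ε (Usel 0) P0 (Usel ε - Usel 0)))
      (𝓝[>] 0) (𝓝 R1))
    (R2 : ℝ)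
    (hR2 : Tendsto (fun ε : ℝ => (1 / ℓ ε) *
        (DU ε (Usel 0) P0 (Usel ε - Usel 0) - DU 0 (Usel 0) P0 (Usel ε - Usel 0)))
      (𝓝[>] 0) (𝓝 R2)) :
    Tendsto (fun ε : ℝ => (L ε (Usel ε) 0 - L 0 (Usel 0) 0) / ℓ ε)
      (𝓝[>] 0) (𝓝 (dL + R1 + R2)) := by
  have hP0 : ∀ φ : X, DU 0 (Usel 0) P0 φ = 0 := by
    have h : P0 ∈ {P : Y | ∀ φ : X, DU 0 (Usel 0) P φ = 0} := by
      rw [hadj]; rfl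
    exact h
  have hmem : ∀ ε ∈ Set.Icc (0:ℝ) τ, ∀ ψ : Y, L ε (Usel ε) ψ = L ε (Usel ε) 0 := by
    intro ε hε ψ
    have h : Usel ε ∈ {U : X | ∀ ψ : Y, L ε U ψ = L ε U 0} := by
      rw [hstate ε hε]; rfl
    exact h ψ
  have hev : (fun ε : ℝ => (L ε (Usel 0) P0 - L 0 (Usel 0) P0) / ℓ ε
          + (1 / ℓ ε) * (∫ θ in (0:ℝ)..1,
              (DU ε (θ • Usel ε + (1 - θ) • Usel 0) P0 (Usel ε - Usel 0)
                - DU ε (Usel 0) P0 (Usel ε - Usel 0)))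
          + (1 / ℓ ε) * (DU ε (Usel 0) P0 (Usel ε - Usel 0)
              - DU 0 (Usel 0) P0 (Usel ε - Usel 0)))
      =ᶠ[𝓝[>] (0:ℝ)] (fun ε : ℝ => (L ε (Usel ε) 0 - L 0 (Usel 0) 0) / ℓ ε) := by
    filter_upwards [Ioc_mem_nhdsGT_of_mem ⟨le_refl 0, hτ⟩] with ε hε
    have hεIcc : ε ∈ Set.Icc (0:ℝ) τ := ⟨hε.1.le, hε.2⟩
    have h0Icc : (0:ℝ) ∈ Set.Icc (0:ℝ) τ := ⟨le_refl 0, hτ.le⟩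
    have hseg : ∀ θ : ℝ, Usel 0 + θ • (Usel ε - Usel 0)
        = θ • Usel ε + (1 - θ) • Usel 0 := by intro θ; module
    have hAC' := hAC ε hεIcc
    have hfint := (hDU ε hεIcc).2
    simp only [hseg] at hAC' hfint
    have hsplit : (∫ θ in (0:ℝ)..1,
          DU ε (θ • Usel ε + (1 - θ) • Usel 0) P0 (Usel ε - Usel 0))
        = (∫ θ in (0:ℝ)..1,
            (DU ε (θ • Usel ε + (1 - θ) • Usel 0) P0 (Usel ε - Usel 0)
              - DU ε (Usel 0) P0 (Usel ε - Usel 0)))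
          + DU ε (Usel 0) P0 (Usel ε - Usel 0) := by
      rw [intervalIntegral.integral_sub hfint intervalIntegrable_const,
        intervalIntegral.integral_const]
      simp
    have hL1 : L ε (Usel ε) 0 = L ε (Usel ε) P0 := (hmem ε hεIcc P0).symm
    have hL0 : L 0 (Usel 0) 0 = L 0 (Usel 0) P0 := (hmem 0 h0Icc P0).symm
    have hne : ℓ ε ≠ 0 := (hℓpos ε hε).ne'
    have key : L ε (Usel ε) P0 - L 0 (Usel 0) P0
        = (L ε (Usel 0) P0 - L 0 (Usel 0) P0)
          + (∫ θ in (0:ℝ)..1,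
              (DU ε (θ • Usel ε + (1 - θ) • Usel 0) P0 (Usel ε - Usel 0)
                - DU ε (Usel 0) P0 (Usel ε - Usel 0)))
          + DU ε (Usel 0) P0 (Usel ε - Usel 0) := by
      linarith [hAC', hsplit]
    rw [hL1, hL0, hP0 (Usel ε - Usel 0), key]
    field_simp
    ring
  exact Tendsto.congr' hev ((hdL.add hR1).add hR2)
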